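/- Under the assumptions that HN = 0, NᵀN = I, S = NᵀC₊N is invertible, and β* is any vector with Hβ* = h, the vector β̂ = NS⁻¹Nᵀb + (I_K − NS⁻¹NᵀC₊)β* satisfies both NᵀC₊β̂ = Nᵀb and Hβ̂ = h. -/
import Mathlib


open Matrix

/-- Theorem 3: with `H N = 0`, `Nᵀ N = I`, `S = Nᵀ C₊ N` invertible and `H β* = h`,
the vector `β̂ = N S⁻¹ Nᵀ b + (I − N S⁻¹ Nᵀ C₊) β*` solves both equations
`Nᵀ C₊ β̂ = Nᵀ b` and `H β̂ = h`. -/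
theorem stmt_15 (K q p : ℕ) (C : Matrix (Fin K) (Fin K) ℝ)
    (H : Matrix (Fin q) (Fin K) ℝ) (N : Matrix (Fin K) (Fin p) ℝ)
    (hHN : H * N = 0) (hN : Nᵀ * N = 1)
    (hS : IsUnit (Nᵀ * C * N))
    (b : Fin K → ℝ) (h : Fin q → ℝ)
    (βs : Fin K → ℝ) (hβs : H *ᵥ βs = h) :
    (Nᵀ * C) *ᵥ ((N * (Nᵀ * C * N)⁻¹ * Nᵀ) *ᵥ b +
        (1 - N * (Nᵀ * C * N)⁻¹ * Nᵀ * C) *ᵥ βs) = Nᵀ *ᵥ b ∧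
    H *ᵥ ((N * (Nᵀ * C * N)⁻¹ * Nᵀ) *ᵥ b +
        (1 - N * (Nᵀ * C * N)⁻¹ * Nᵀ * C) *ᵥ βs) = h := by
  have hSS : (Nᵀ * C * N) * (Nᵀ * C * N)⁻¹ = 1 :=
    mul_nonsing_inv _ (isUnit_iff_isUnit_det _ |>.mp hS)
  have key : (Nᵀ * C) * (N * (Nᵀ * C * N)⁻¹ * Nᵀ) = Nᵀ := by
    rw [← Matrix.mul_assoc, ← Matrix.mul_assoc, hSS, Matrix.one_mul]
  have keyH : H * (N * (Nᵀ * C * N)⁻¹ * Nᵀ) = 0 := by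
    rw [← Matrix.mul_assoc, ← Matrix.mul_assoc, hHN, Matrix.zero_mul, Matrix.zero_mul]
  have key2 : (Nᵀ * C) * (1 - N * (Nᵀ * C * N)⁻¹ * Nᵀ * C) = 0 := by
    rw [Matrix.mul_sub, Matrix.mul_one, ← Matrix.mul_assoc, key, sub_self]
  have key3 : H * (1 - N * (Nᵀ * C * N)⁻¹ * Nᵀ * C) = H := by
    rw [Matrix.mul_sub, Matrix.mul_one, ← Matrix.mul_assoc, keyH, Matrix.zero_mul, sub_zero]
  constructor
  · rw [Matrix.mulVec_add, Matrix.mulVec_mulVec, Matrix.mulVec_mulVec, key, key2,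
      Matrix.zero_mulVec, add_zero]
  · rw [Matrix.mulVec_add, Matrix.mulVec_mulVec, Matrix.mulVec_mulVec, keyH, key3,
      Matrix.zero_mulVec, zero_add, hβs]
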